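/- arXiv:2406.19854 — 3 statements merged into one kernel-verified Lean document; each statement's English description precedes it below -/
import Mathlib

section
/- For each finite cardinality n + 1, there are, up to isomorphism of symmetric simplicial sets, only finitely many partial groups X with |X_1| = n + 1. -/
/-- A symmetric (simplicial) set: a functor `Υᵒᵖ → Set`, where `Υ` has objects
`[n] = {0,…,n}` (encoded as `Fin (n+1)`) and all functions as morphisms.
For `α : [m] → [n]` and `x ∈ X_n`, `act α x` is `x · α ∈ X_m`. -/
structure SymSet where
  obj : ℕ → Type
  act : ∀ {m n : ℕ}, (Fin (m + 1) → Fin (n + 1)) → obj n → obj m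
  act_id : ∀ {n : ℕ} (x : obj n), act id x = x
  act_comp : ∀ {m n k : ℕ} (α : Fin (m + 1) → Fin (n + 1)) (β : Fin (n + 1) → Fin (k + 1))
      (x : obj k), act α (act β x) = act (β ∘ α) x

namespace SymSet

/-- `x_{ij} ∈ X_1`, the action on `x ∈ X_n` of the map `[1] → [n]` with `0 ↦ i`, `1 ↦ j`. -/
def edge (X : SymSet) {n : ℕ} (i j : Fin (n + 1)) (x : X.obj n) : X.obj 1 :=
  X.act (fun t : Fin 2 => if t = 0 then i else j) x

/-- The domain of an edge, its image under `ι₀ : [0] → [1]`, `0 ↦ 0`. -/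
def edgeDom (X : SymSet) (f : X.obj 1) : X.obj 0 :=
  X.act (fun _ : Fin 1 => (0 : Fin 2)) f

/-- The codomain of an edge, its image under `ι₁ : [0] → [1]`, `0 ↦ 1`. -/
def edgeCod (X : SymSet) (f : X.obj 1) : X.obj 0 :=
  X.act (fun _ : Fin 1 => (1 : Fin 2)) f

/-- The identity edge `id_a` on an object `a ∈ X_0`, induced by the unique map `[1] → [0]`. -/
def identityEdge (X : SymSet) (a : X.obj 0) : X.obj 1 :=
  X.act (fun _ : Fin 2 => (0 : Fin 1)) a

/-- An edge is an identity if it is in the image of `X_0 → X_1`. -/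
def IsIdentityEdge (X : SymSet) (f : X.obj 1) : Prop :=
  ∃ a : X.obj 0, f = X.identityEdge a

/-- The tuple of edges `x_{ij}` (for `i < j` an edge `{i,j}` of the spine `T`)
associated to an `n`-simplex `x`. -/
def spineTuple (X : SymSet) {n : ℕ} (T : SimpleGraph (Fin (n + 1))) (x : X.obj n) :
    ∀ i j : Fin (n + 1), i < j → T.Adj i j → X.obj 1 :=
  fun i j _ _ => X.edge i j x

/-- Membership in `lim_T X`: the components have matching endpoints. -/
def IsSpineLim (X : SymSet) {n : ℕ} (T : SimpleGraph (Fin (n + 1)))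
    (e : ∀ i j : Fin (n + 1), i < j → T.Adj i j → X.obj 1) : Prop :=
  ∃ v : Fin (n + 1) → X.obj 0, ∀ (i j : Fin (n + 1)) (hlt : i < j) (h : T.Adj i j),
    X.edgeDom (e i j hlt h) = v i ∧ X.edgeCod (e i j hlt h) = v j

/-- The limit `lim_T X` of the diagram associated to a spine `T`. -/
def SpineLim (X : SymSet) {n : ℕ} (T : SimpleGraph (Fin (n + 1))) : Type :=
  { e : ∀ i j : Fin (n + 1), i < j → T.Adj i j → X.obj 1 // X.IsSpineLim T e }

lemma spineTuple_isSpineLim (X : SymSet) {n : ℕ} (T : SimpleGraph (Fin (n + 1)))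
    (x : X.obj n) : X.IsSpineLim T (X.spineTuple T x) := by
  refine ⟨fun i => X.act (fun _ : Fin 1 => i) x, fun i j hlt h => ⟨?_, ?_⟩⟩
  · show X.act _ (X.act _ x) = _
    rw [X.act_comp]
    show X.act ((fun t : Fin 2 => if t = 0 then i else j) ∘ fun _ : Fin 1 => 0) x
      = X.act (fun _ : Fin 1 => i) x
    congr 1
  · show X.act _ (X.act _ x) = _
    rw [X.act_comp]
    show X.act ((fun t : Fin 2 => if t = 0 then i else j) ∘ fun _ : Fin 1 => 1) x
      = X.act (fun _ : Fin 1 => j) x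
    congr 1

/-- The map `𝓔_T : X_n → lim_T X`. -/
def spineMap (X : SymSet) {n : ℕ} (T : SimpleGraph (Fin (n + 1))) (x : X.obj n) :
    X.SpineLim T :=
  ⟨X.spineTuple T x, X.spineTuple_isSpineLim T x⟩

/-- A symmetric set is *spiny* if `𝓔_T` is injective for every `n ≥ 1` and
every spine `T` of `[n]` (a tree with vertex set `[n]`). -/
def Spiny (X : SymSet) : Prop :=
  ∀ n : ℕ, 1 ≤ n → ∀ T : SimpleGraph (Fin (n + 1)), T.IsTree →
    Function.Injective (X.spineMap T)

/-- An element `x ∈ X_n` is degenerate if `x = y · σ` for some noninvertible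
surjection `σ : [n] → [k]`. -/
def Degenerate (X : SymSet) {n : ℕ} (x : X.obj n) : Prop :=
  ∃ (k : ℕ) (σ : Fin (n + 1) → Fin (k + 1)) (y : X.obj k),
    Function.Surjective σ ∧ ¬ Function.Bijective σ ∧ x = X.act σ y

/-- A symmetric subset (subfunctor) of `X`. -/
structure SymSubset (X : SymSet) where
  carrier : ∀ n : ℕ, Set (X.obj n)
  act_mem : ∀ {m n : ℕ} (α : Fin (m + 1) → Fin (n + 1)) {x : X.obj n},
    x ∈ carrier n → X.act α x ∈ carrier m

/-- `X` is `n`-skeletal: the smallest symmetric subset of `X` containing all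
of its `n`-simplices is all of `X`. -/
def IsSkeletal (X : SymSet) (n : ℕ) : Prop :=
  ∀ Y : SymSubset X, (∀ x : X.obj n, x ∈ Y.carrier n) →
    ∀ (m : ℕ) (x : X.obj m), x ∈ Y.carrier m

/-- `X` has dimension `n`: it is `n`-skeletal but not `k`-skeletal for `k < n`
(for `n ≥ 1` this is equivalent to not being `(n-1)`-skeletal). -/
def HasDim (X : SymSet) (n : ℕ) : Prop :=
  X.IsSkeletal n ∧ ∀ k : ℕ, k < n → ¬ X.IsSkeletal k

/-- Two objects are related if there is an edge between them (in either direction). -/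
def EdgeRel (X : SymSet) (a b : X.obj 0) : Prop :=
  ∃ f : X.obj 1, (X.edgeDom f = a ∧ X.edgeCod f = b) ∨ (X.edgeDom f = b ∧ X.edgeCod f = a)

/-- `X` is connected: it is nonempty and any two objects are joined by a
zig-zag of edges. -/
def Connected (X : SymSet) : Prop :=
  Nonempty (X.obj 0) ∧ ∀ a b : X.obj 0, Relation.ReflTransGen X.EdgeRel a b

/-- `n_a`: the number of nonidentity edges with domain `a`. -/
noncomputable def nEdges (X : SymSet) (a : X.obj 0) : ℕ :=
  Nat.card { f : X.obj 1 // X.edgeDom f = a ∧ ¬ X.IsIdentityEdge f }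

/-- `p(X)`: the maximum of the `n_a` over all objects `a`. -/
noncomputable def pVal (X : SymSet) : ℕ := ⨆ a : X.obj 0, X.nEdges a

/-- A map of symmetric sets (a natural transformation). -/
structure SymMap (X Y : SymSet) where
  app : ∀ n : ℕ, X.obj n → Y.obj n
  naturality : ∀ {m n : ℕ} (α : Fin (m + 1) → Fin (n + 1)) (x : X.obj n),
    app m (X.act α x) = Y.act α (app n x)

/-- A map of symmetric sets is an isomorphism iff it is levelwise bijective. -/
def SymMap.IsIso {X Y : SymSet} (F : SymMap X Y) : Prop :=
  ∀ n : ℕ, Function.Bijective (F.app n)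

/-- `X` and `Y` are isomorphic symmetric sets. -/
def Isomorphic (X Y : SymSet) : Prop := ∃ F : SymMap X Y, F.IsIso

/-- The Bousfield–Segal map `𝓑_m : X_m → X_1^m`, `x ↦ (x_{01}, x_{02}, …, x_{0m})`. -/
def bousfield (X : SymSet) {m : ℕ} (x : X.obj m) : Fin m → X.obj 1 :=
  fun i => X.edge 0 i.succ x

/-- `X` is spiny in degrees below `q`: `𝓔_T` is injective for every spine `T`
of `[n]` for each `1 ≤ n ≤ q`. -/
def SpinyBelow (X : SymSet) (q : ℕ) : Prop :=
  ∀ n : ℕ, 1 ≤ n → n ≤ q → ∀ T : SimpleGraph (Fin (n + 1)), T.IsTree →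
    Function.Injective (X.spineMap T)

/-- `X` is a groupoid: `𝓔_T : X_n → lim_T X` is a bijection for every `n ≥ 1`
and every spine `T` of `[n]`. -/
def IsGroupoid (X : SymSet) : Prop :=
  ∀ n : ℕ, 1 ≤ n → ∀ T : SimpleGraph (Fin (n + 1)), T.IsTree →
    Function.Bijective (X.spineMap T)

/-- `X` is reduced: `X_0` is a singleton. -/
def Reduced (X : SymSet) : Prop := Nonempty (X.obj 0) ∧ Subsingleton (X.obj 0)

/-- A partial group is a reduced spiny symmetric set. -/
def IsPartialGroup (X : SymSet) : Prop := X.Reduced ∧ X.Spiny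

/-- The levelwise product of two symmetric sets. -/
def prod (X Y : SymSet) : SymSet where
  obj n := X.obj n × Y.obj n
  act α p := (X.act α p.1, Y.act α p.2)
  act_id p := by cases p with | mk a b => simp only [X.act_id, Y.act_id]
  act_comp α β p := by cases p with | mk a b => simp only [X.act_comp, Y.act_comp]

end SymSet
/-! ### Auxiliary development -/

section StarTree

/-- The star graph on `Fin (m+1)` centered at `0`. -/
def starGraph (m : ℕ) : SimpleGraph (Fin (m+1)) where
  Adj i j := i ≠ j ∧ (i = 0 ∨ j = 0)
  symm := by constructor; intro i j h; exact ⟨h.1.symm, h.2.symm⟩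
  loopless := by constructor; intro i h; exact h.1 rfl

theorem starGraph_connected (m : ℕ) : (starGraph m).Connected := by
  rw [SimpleGraph.connected_iff]
  refine ⟨fun u v => ?_, ⟨0⟩⟩
  have h0 : ∀ w : Fin (m+1), (starGraph m).Reachable w 0 := by
    intro w
    by_cases hw : w = 0
    · exact hw ▸ SimpleGraph.Reachable.refl _
    · exact SimpleGraph.Adj.reachable ⟨hw, Or.inr rfl⟩
  exact (h0 u).trans (h0 v).symm

theorem starGraph_acyclic (m : ℕ) : (starGraph m).IsAcyclic := by
  intro v c hc
  have h3 := hc.three_le_length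
  cases c with
  | nil => simp at h3
  | cons h₁ p =>
    rename_i a
    cases p with
    | nil => simp at h3
    | cons h₂ p₂ =>
      rename_i b
      have htail : (SimpleGraph.Walk.cons h₁ (SimpleGraph.Walk.cons h₂ p₂)).support.tail
          = a :: p₂.support := by
        simp [SimpleGraph.Walk.support_cons]
      have hnd : (a :: p₂.support).Nodup := by
        have := hc.2
        rw [htail] at this
        exact this
      rcases h₁ with ⟨hva, hv0⟩
      by_cases ha : a = 0
      · subst ha
        have hvne : v ≠ 0 := hva
        have hbne : b ≠ 0 := fun h => h₂.1 h.symm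
        cases p₂ with
        | nil =>
          change 3 ≤ 0 + 1 + 1 at h3; omega
        | cons h₃ q =>
          rename_i d
          have hd0 : d = 0 := by
            rcases h₃ with ⟨hbd, h⟩
            rcases h with h | h
            · exact absurd h hbne
            · exact h
          have h0mem : (0:Fin (m+1)) ∈ (SimpleGraph.Walk.cons h₃ q).support := by
            rw [SimpleGraph.Walk.support_cons]
            exact List.mem_cons_of_mem _ (hd0 ▸ SimpleGraph.Walk.start_mem_support q)
          exact (List.nodup_cons.mp hnd).1 h0mem
      · have hv0' : v = 0 := hv0.resolve_right ha
        have hb0 : b = 0 := by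
          rcases h₂.2 with h | h
          · exact absurd h ha
          · exact h
        subst hv0'; subst hb0
        cases p₂ with
        | nil => change 3 ≤ 0 + 1 + 1 at h3; omega
        | cons h₄ q =>
          rename_i e
          have hnd2 := (List.nodup_cons.mp hnd).2
          have h0q : (0:Fin (m+1)) ∈ q.support := SimpleGraph.Walk.end_mem_support _
          rw [SimpleGraph.Walk.support_cons] at hnd2
          exact (List.nodup_cons.mp hnd2).1 h0q

theorem starGraph_isTree (m : ℕ) : (starGraph m).IsTree :=
  ⟨starGraph_connected m, starGraph_acyclic m⟩

end StarTree

namespace SymSet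

lemma edge_act (X : SymSet) {m k : ℕ} (τ : Fin (m+1) → Fin (k+1)) (i j : Fin (m+1))
    (x : X.obj k) : X.edge i j (X.act τ x) = X.edge (τ i) (τ j) x := by
  unfold edge
  rw [X.act_comp]
  congr 1
  funext t
  by_cases h : t = 0 <;> simp [h]

/-- Spininess via the star spine: an `m`-simplex is determined by the edges `x₀ᵢ`. -/
lemma star_ext (X : SymSet) (hs : X.Spiny) {m : ℕ} (hm : 1 ≤ m) {x y : X.obj m}
    (h : ∀ d : Fin (m+1), X.edge 0 d x = X.edge 0 d y) : x = y := by
  apply hs m hm (starGraph m) (starGraph_isTree m)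
  apply Subtype.ext
  funext i j hlt hadj
  show X.edge i j x = X.edge i j y
  have hi : i = 0 := by
    rcases hadj.2 with h0 | h0
    · exact h0
    · subst h0
      exact absurd hlt (by simp [Fin.lt_def])
  subst hi
  exact h j

lemma obj_nonempty (X : SymSet) (hne : Nonempty (X.obj 0)) (k : ℕ) : Nonempty (X.obj k) :=
  hne.elim fun a => ⟨X.act (fun _ : Fin (k+1) => (0 : Fin 1)) a⟩

lemma starTuple_inj (X : SymSet) (hpg : X.IsPartialGroup) (k : ℕ) :
    Function.Injective (fun x : X.obj k => fun d : Fin (k+1) => X.edge 0 d x) := by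
  intro x y h
  rcases Nat.eq_zero_or_pos k with hk | hk
  · subst hk
    haveI := hpg.1.2
    exact Subsingleton.elim x y
  · exact X.star_ext hpg.2 hk (fun d => congrFun h d)

lemma obj_finite (X : SymSet) (hpg : X.IsPartialGroup) (hfin : Finite (X.obj 1)) (k : ℕ) :
    Finite (X.obj k) :=
  Finite.of_injective _ (X.starTuple_inj hpg k)

lemma card_obj_le (X : SymSet) (hpg : X.IsPartialGroup) {n : ℕ}
    (hc : Nat.card (X.obj 1) = n + 1) (k : ℕ) : Nat.card (X.obj k) ≤ (n+1)^(k+1) := by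
  haveI hfin : Finite (X.obj 1) := Nat.finite_of_card_ne_zero (by omega)
  calc Nat.card (X.obj k) ≤ Nat.card (Fin (k+1) → X.obj 1) :=
        Nat.card_le_card_of_injective _ (X.starTuple_inj hpg k)
    _ = (n+1)^(k+1) := by rw [Nat.card_fun]; simp [hc]

/-- If `|X₁| = n+1` then every simplex of dimension `> n` is a degeneracy. -/
lemma degenerate_of_card (X : SymSet) (hpg : X.IsPartialGroup) {n : ℕ}
    (hc : Nat.card (X.obj 1) = n + 1) {m : ℕ} (hm : n ≤ m) (x : X.obj (m+1)) :
    ∃ (σ : Fin (m+2) → Fin (m+1)) (y : X.obj m), x = X.act σ y := by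
  haveI hfin : Finite (X.obj 1) := Nat.finite_of_card_ne_zero (by omega)
  haveI := Fintype.ofFinite (X.obj 1)
  have hcard1 : Fintype.card (X.obj 1) = n + 1 := by
    rw [← Nat.card_eq_fintype_card, hc]
  obtain ⟨b₀, c₀, hbc₀, heq₀⟩ := Fintype.exists_ne_map_eq_of_card_lt
      (fun d : Fin (m+2) => X.edge 0 d x) (by simp [hcard1]; omega)
  obtain ⟨b, c, hbc, hc0, heq⟩ : ∃ b c : Fin (m+2), b ≠ c ∧ c ≠ 0 ∧
      X.edge 0 c x = X.edge 0 b x := by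
    by_cases h : c₀ = 0
    · exact ⟨c₀, b₀, hbc₀.symm, fun hb => hbc₀ ((h.trans hb.symm).symm), heq₀⟩
    · exact ⟨b₀, c₀, hbc₀, h, heq₀.symm⟩
  set τ : Fin (m+2) → Fin (m+2) := fun d => if d = c then b else d with hτ
  have hτx : X.act τ x = x := by
    apply X.star_ext hpg.2 (by omega)
    intro d
    rw [X.edge_act]
    have hτ0 : τ 0 = 0 := by simp [hτ, Ne.symm hc0]
    rw [hτ0]
    by_cases hd : d = c
    · subst hd
      simp only [hτ, if_pos rfl]
      exact heq.symm
    · simp [hτ, hd]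
  set compress : Fin (m+2) → Fin (m+1) :=
    fun d => ⟨if d.val < c.val then d.val else d.val - 1, by
      have h1 := c.isLt; have h2 := d.isLt; split <;> omega⟩ with hcomp
  set emb : Fin (m+1) → Fin (m+2) :=
    fun d => ⟨if d.val < c.val then d.val else d.val + 1, by
      have h2 := d.isLt; split <;> omega⟩ with hemb
  have hembcomp : ∀ d : Fin (m+2), d ≠ c → emb (compress d) = d := by
    intro d hd
    have hdc : d.val ≠ c.val := fun h => hd (Fin.ext h)
    apply Fin.ext
    simp only [hemb, hcomp]
    split_ifs <;> omega
  refine ⟨fun d => compress (τ d), X.act emb x, ?_⟩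
  rw [X.act_comp]
  have hfac : (emb ∘ fun d => compress (τ d)) = τ := by
    funext d
    apply hembcomp
    by_cases hd : d = c
    · subst hd; simp [hτ, hbc]
    · simp [hτ, hd]
  rw [hfac, hτx]

/-- Two partial groups with `|X₁| = n+1` that are isomorphic compatibly up to level `n+1`
are isomorphic. -/
lemma iso_of_trunc (n : ℕ) (X Y : SymSet) (hX : X.IsPartialGroup) (hY : Y.IsPartialGroup)
    (hcX : Nat.card (X.obj 1) = n + 1) (hcY : Nat.card (Y.obj 1) = n + 1)
    (φ : ∀ k, k ≤ n + 1 → X.obj k → Y.obj k)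
    (hbij : ∀ k (hk : k ≤ n + 1), Function.Bijective (φ k hk))
    (hnat : ∀ i j (hi : i ≤ n+1) (hj : j ≤ n+1) (α : Fin (i+1) → Fin (j+1)) (x : X.obj j),
      φ i hi (X.act α x) = Y.act α (φ j hj x)) :
    SymSet.Isomorphic X Y := by
  haveI hYs : Subsingleton (Y.obj 0) := hY.1.2
  haveI hXs : Subsingleton (X.obj 0) := hX.1.2
  have h1 : (1:ℕ) ≤ n+1 := by omega
  set φ1 := φ 1 h1 with hφ1
  set P : ∀ m, X.obj m → Y.obj m → Prop :=
    fun m x z => ∀ i j : Fin (m+1), Y.edge i j z = φ1 (X.edge i j x) with hP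
  have uniq : ∀ m x z z', P m x z → P m x z' → z = z' := by
    intro m x z z' hz hz'
    rcases Nat.eq_zero_or_pos m with h | h
    · subst h; exact Subsingleton.elim _ _
    · exact Y.star_ext hY.2 h (fun d => (hz 0 d).trans (hz' 0 d).symm)
  have exi : ∀ m x, ∃ z, P m x z := by
    intro m
    induction m using Nat.strong_induction_on with
    | _ m ih =>
      intro x
      by_cases hm : m ≤ n + 1
      · refine ⟨φ m hm x, fun i j => ?_⟩
        exact (hnat 1 m h1 hm (fun t : Fin 2 => if t = 0 then i else j) x).symm
      · obtain ⟨m', rfl⟩ : ∃ m', m = m' + 1 := ⟨m - 1, by omega⟩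
        obtain ⟨σ, y, hxy⟩ := X.degenerate_of_card hX hcX (show n ≤ m' by omega) x
        obtain ⟨z', hz'⟩ := ih m' (by omega) y
        refine ⟨Y.act σ z', fun i j => ?_⟩
        rw [hxy, X.edge_act, Y.edge_act]
        exact hz' (σ i) (σ j)
  choose ψ hψ using exi
  have hnatψ : ∀ {m k : ℕ} (α : Fin (m+1) → Fin (k+1)) (x : X.obj k),
      ψ m (X.act α x) = Y.act α (ψ k x) := by
    intro m k α x
    refine uniq m (X.act α x) _ _ (hψ m _) (fun i j => ?_)
    rw [Y.edge_act, X.edge_act]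
    exact hψ k x (α i) (α j)
  have hsurj : ∀ m, Function.Surjective (ψ m) := by
    intro m
    induction m using Nat.strong_induction_on with
    | _ m ih =>
      intro z
      by_cases hm : m ≤ n + 1
      · obtain ⟨x, hx⟩ := (hbij m hm).2 z
        refine ⟨x, uniq m x _ _ (hψ m x) (fun i j => ?_)⟩
        rw [← hx]
        exact (hnat 1 m h1 hm (fun t : Fin 2 => if t = 0 then i else j) x).symm
      · obtain ⟨m', rfl⟩ : ∃ m', m = m' + 1 := ⟨m - 1, by omega⟩
        obtain ⟨σ, w, hzw⟩ := Y.degenerate_of_card hY hcY (show n ≤ m' by omega) z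
        obtain ⟨y, hy⟩ := ih m' (by omega) w
        refine ⟨X.act σ y, ?_⟩
        rw [hnatψ σ y, hy, ← hzw]
  refine ⟨⟨ψ, fun {m k} α x => hnatψ α x⟩, fun m => ⟨?_, hsurj m⟩⟩
  intro x x' hxx
  rcases Nat.eq_zero_or_pos m with h | h
  · subst h; exact Subsingleton.elim _ _
  · refine X.star_ext hX.2 h (fun d => ?_)
    have ha := hψ m x 0 d
    have hb := hψ m x' 0 d
    rw [show ψ m x = ψ m x' from hxx] at ha
    exact (hbij 1 h1).1 (ha.symm.trans hb)

end SymSet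


/-- A trivial symmetric set used as a junk value. -/
def junkSym : SymSet where
  obj _ := Unit
  act _ _ := ()
  act_id _ := rfl
  act_comp _ _ _ := rfl

/-- up to isomorphism there are only finitely many partial groups with
`|X_1| = n + 1`. -/
theorem stmt16 (n : ℕ) :
    ∃ (ι : Type) (_ : Finite ι) (F : ι → SymSet),
      ∀ X : SymSet, X.IsPartialGroup → Nat.card (X.obj 1) = n + 1 →
        ∃ i : ι, SymSet.Isomorphic X (F i) := by
  classical
  set B : ℕ := (n+1)^(n+2) with hB
  set ι : Type := (Fin (n+2) → Set (Fin B)) ×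
    (∀ i j : Fin (n+2), (Fin (i.val+1) → Fin (j.val+1)) → Fin B → Fin B) with hι
  haveI : Finite ι := by
    haveI : Finite (Set (Fin B)) := inferInstance
    infer_instance
  set Good : ι → SymSet → Prop := fun d X =>
    X.IsPartialGroup ∧ Nat.card (X.obj 1) = n + 1 ∧
    ∃ e : ∀ k : Fin (n+2), X.obj k.val → Fin B,
      (∀ k, Function.Injective (e k)) ∧
      (∀ k, Set.range (e k) = d.1 k) ∧
      (∀ (i j : Fin (n+2)) (α : Fin (i.val+1) → Fin (j.val+1)) (x : X.obj j.val),
        e i (X.act α x) = d.2 i j α (e j x)) with hGood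
  set F : ι → SymSet := fun d => if h : ∃ X, Good d X then h.choose else junkSym with hF
  refine ⟨ι, inferInstance, F, ?_⟩
  intro X hpg hcard
  -- build injections into `Fin B`
  haveI hfin1 : Finite (X.obj 1) := Nat.finite_of_card_ne_zero (by omega)
  haveI hfink : ∀ k : ℕ, Finite (X.obj k) := fun k => X.obj_finite hpg hfin1 k
  have hne : ∀ k : ℕ, Nonempty (X.obj k) := X.obj_nonempty hpg.1.1
  have hex_e : ∀ k : Fin (n+2), ∃ f : X.obj k.val → Fin B, Function.Injective f := by
    intro k
    have hle : Nat.card (X.obj k.val) ≤ B := by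
      refine le_trans (X.card_obj_le hpg hcard k.val) ?_
      rw [hB]
      exact Nat.pow_le_pow_right (by omega) (by omega)
    exact ⟨fun x => Fin.castLE hle ((Finite.equivFin _) x),
      (Fin.castLE_injective hle).comp (Equiv.injective _)⟩
  choose e he using hex_e
  set d : ι := ⟨fun k => Set.range (e k),
    fun i j α b => e i (X.act α (@Function.invFun _ _ (hne j.val) (e j) b))⟩ with hd
  have hactX : ∀ (i j : Fin (n+2)) (α : Fin (i.val+1) → Fin (j.val+1)) (x : X.obj j.val),
      e i (X.act α x) = d.2 i j α (e j x) := by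
    intro i j α x
    show e i (X.act α x) = e i (X.act α (@Function.invFun _ _ (hne j.val) (e j) (e j x)))
    rw [Function.leftInverse_invFun (he j) x]
  have hgoodX : Good d X := ⟨hpg, hcard, e, he, fun k => rfl, hactX⟩
  have hexd : ∃ X', Good d X' := ⟨X, hgoodX⟩
  refine ⟨d, ?_⟩
  have hFd : F d = hexd.choose := by rw [hF]; exact dif_pos hexd
  rw [hFd]
  set Y := hexd.choose with hY
  obtain ⟨hpg', hcard', e', he', hre', hact'⟩ := hexd.choose_spec
  have hner : ∀ k : Fin (n+2), Set.range (e k) = Set.range (e' k) := by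
    intro k
    have h0 : Set.range (e k) = d.1 k := rfl
    rw [h0, ← hre' k]
  have hneY : ∀ k : ℕ, Nonempty (Y.obj k) := Y.obj_nonempty hpg'.1.1
  -- the truncated isomorphism
  have hφ : ∀ k : Fin (n+2), ∃ φ : X.obj k.val → Y.obj k.val,
      ∀ x, e' k (φ x) = e k x := by
    intro k
    haveI := hneY k.val
    refine ⟨fun x => Function.invFun (e' k) (e k x), fun x => ?_⟩
    apply Function.invFun_eq
    have : e k x ∈ Set.range (e' k) := by rw [← hner k]; exact ⟨x, rfl⟩
    exact this
  choose φ hφe using hφ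
  have hφbij : ∀ k : Fin (n+2), Function.Bijective (φ k) := by
    intro k
    constructor
    · intro x y hxy
      apply he k
      rw [← hφe k x, ← hφe k y, hxy]
    · intro y
      have : e' k y ∈ Set.range (e k) := by rw [hner k]; exact ⟨y, rfl⟩
      obtain ⟨x, hx⟩ := this
      refine ⟨x, he' k ?_⟩
      rw [hφe k x, hx]
  have hφnat : ∀ (i j : Fin (n+2)) (α : Fin (i.val+1) → Fin (j.val+1)) (x : X.obj j.val),
      φ i (X.act α x) = Y.act α (φ j x) := by
    intro i j α x
    apply he' i
    rw [hφe i (X.act α x), hactX i j α x, ← hφe j x]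
    exact (hact' i j α (φ j x)).symm
  exact SymSet.iso_of_trunc n X Y hpg hpg' hcard hcard'
    (fun k hk => φ ⟨k, by omega⟩) (fun k hk => hφbij ⟨k, by omega⟩)
    (fun i j hi hj α x => hφnat ⟨i, by omega⟩ ⟨j, by omega⟩ α x)
end

section
/- (Eilenberg–Zilber lemma for symmetric sets.) Let X be a symmetric simplicial set and x ∈ X_m. Then there exist k, a nondegenerate element y ∈ X_k, and a surjection σ : [m] → [k] with x = y·σ. Moreover this pair is essentially unique: if y' ∈ X_{k'} is nondegenerate and σ' : [m] → [k'] is a surjection with x = y'·σ', then k = k' and there is a unique automorphism α of [k] with y = y'·α and α∘σ = σ'. -/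
/-- Any map between nonempty finite ordinals factors as an injection after a surjection. -/
lemma ez_factor {k k' : ℕ} (f : Fin (k + 1) → Fin (k' + 1)) :
    ∃ (j : ℕ) (ρ : Fin (k + 1) → Fin (j + 1)) (ι : Fin (j + 1) → Fin (k' + 1)),
      Function.Surjective ρ ∧ Function.Injective ι ∧ ι ∘ ρ = f := by
  haveI : Nonempty (Set.range f) := ⟨⟨f 0, 0, rfl⟩⟩
  obtain ⟨j, hj⟩ : ∃ j, Fintype.card (Set.range f) = j + 1 :=
    ⟨Fintype.card (Set.range f) - 1, (Nat.succ_pred_eq_of_pos Fintype.card_pos).symm⟩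
  let e : Set.range f ≃ Fin (j + 1) := (Fintype.equivFin _).trans (finCongr hj)
  refine ⟨j, fun a => e ⟨f a, a, rfl⟩, fun b => (e.symm b : Fin (k' + 1)), ?_, ?_, ?_⟩
  · intro b
    obtain ⟨a, ha⟩ := (e.symm b).2
    refine ⟨a, ?_⟩
    have h2 : (⟨f a, a, rfl⟩ : Set.range f) = e.symm b := Subtype.ext ha
    show e ⟨f a, a, rfl⟩ = b
    rw [h2, e.apply_symm_apply]
  · intro b₁ b₂ h
    exact e.symm.injective (Subtype.ext h)
  · funext a
    show ((e.symm (e ⟨f a, a, rfl⟩)) : Fin (k' + 1)) = f a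
    rw [e.symm_apply_apply]

/-- If a nondegenerate element is `y' · τ`, then `τ` is injective. -/
lemma ez_nondeg_inj (X : SymSet) {k k' : ℕ} {y : X.obj k} {y' : X.obj k'}
    {τ : Fin (k + 1) → Fin (k' + 1)} (hnd : ¬ X.Degenerate y) (h : y = X.act τ y') :
    Function.Injective τ := by
  obtain ⟨j, ρ, ι, hρ, hι, hcomp⟩ := ez_factor τ
  by_cases hρi : Function.Injective ρ
  · rw [← hcomp]; exact hι.comp hρi
  · exact absurd ⟨j, ρ, X.act ι y', hρ, fun hb => hρi hb.injective,
      by rw [X.act_comp, hcomp]; exact h⟩ hnd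

lemma ez_retract (X : SymSet) {m k : ℕ} {σ : Fin (m + 1) → Fin (k + 1)}
    {s : Fin (k + 1) → Fin (m + 1)} (hs : σ ∘ s = id) (y : X.obj k) :
    X.act s (X.act σ y) = y := by rw [X.act_comp, hs, X.act_id]

lemma ez_pull (X : SymSet) {m k k' : ℕ} {σ : Fin (m + 1) → Fin (k + 1)}
    {σ' : Fin (m + 1) → Fin (k' + 1)} {y : X.obj k} {y' : X.obj k'} {x : X.obj m}
    (hx : x = X.act σ y) (hx' : x = X.act σ' y')
    {s : Fin (k + 1) → Fin (m + 1)} (hs : σ ∘ s = id) :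
    y = X.act (σ' ∘ s) y' := by
  have h1 : X.act s x = y := by rw [hx]; exact ez_retract X hs y
  rw [← h1, hx', X.act_comp]

/-- the Eilenberg–Zilber lemma for symmetric sets: every `x ∈ X_m` is
`y·σ` for a nondegenerate `y` and surjection `σ`, essentially uniquely. -/
theorem stmt17 (X : SymSet) (m : ℕ) (x : X.obj m) :
    (∃ (k : ℕ) (σ : Fin (m + 1) → Fin (k + 1)) (y : X.obj k),
        Function.Surjective σ ∧ ¬ X.Degenerate y ∧ x = X.act σ y) ∧
    (∀ (k k' : ℕ) (σ : Fin (m + 1) → Fin (k + 1)) (σ' : Fin (m + 1) → Fin (k' + 1))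
        (y : X.obj k) (y' : X.obj k'),
        Function.Surjective σ → ¬ X.Degenerate y → x = X.act σ y →
        Function.Surjective σ' → ¬ X.Degenerate y' → x = X.act σ' y' →
        k = k' ∧ ∃! α : Fin (k + 1) → Fin (k' + 1),
          Function.Bijective α ∧ y = X.act α y' ∧ α ∘ σ = σ') := by
  classical
  constructor
  · -- existence: take a minimal `k`
    have hP : ∃ k, ∃ σ : Fin (m + 1) → Fin (k + 1), ∃ y : X.obj k,
        Function.Surjective σ ∧ x = X.act σ y :=
      ⟨m, id, x, Function.surjective_id, (X.act_id x).symm⟩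
    obtain ⟨σ, y, hσ, hx⟩ := Nat.find_spec hP
    refine ⟨Nat.find hP, σ, y, hσ, ?_, hx⟩
    rintro ⟨j, τ, z, hτ, hτb, hyz⟩
    have hjk : j < Nat.find hP := by
      have hle : j + 1 ≤ Nat.find hP + 1 := by
        simpa using Fintype.card_le_of_surjective τ hτ
      rcases lt_or_eq_of_le (Nat.succ_le_succ_iff.mp hle) with h | h
      · exact h
      · subst h; exact absurd (Finite.surjective_iff_bijective.mp hτ) hτb
    exact Nat.find_min hP hjk ⟨τ ∘ σ, z, hτ.comp hσ,
      hx.trans (by rw [hyz, X.act_comp])⟩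
  · -- essential uniqueness
    intro k k' σ σ' y y' hσ hy hx hσ' hy' hx'
    have hs : σ ∘ Function.surjInv hσ = id := funext fun b => Function.surjInv_eq hσ b
    have hs' : σ' ∘ Function.surjInv hσ' = id := funext fun b => Function.surjInv_eq hσ' b
    set s := Function.surjInv hσ
    set s' := Function.surjInv hσ'
    have hinj : Function.Injective (σ' ∘ s) := ez_nondeg_inj X hy (ez_pull X hx hx' hs)
    have hinj' : Function.Injective (σ ∘ s') := ez_nondeg_inj X hy' (ez_pull X hx' hx hs')
    have hkk' : k = k' := le_antisymm
      (by simpa using Fintype.card_le_of_injective _ hinj)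
      (by simpa using Fintype.card_le_of_injective _ hinj')
    subst hkk'
    -- the kernels of σ and σ' agree
    have hker : ∀ a b : Fin (m + 1), σ a = σ b → σ' a = σ' b := by
      intro a b hab
      by_contra hne
      have key : ∀ t : Fin (m + 1), σ t = σ a →
          Function.Bijective (σ' ∘ Function.update s (σ a) t) ∧
          (σ' ∘ Function.update s (σ a) t) (σ a) = σ' t := by
        intro t ht
        have hupd : σ ∘ Function.update s (σ a) t = id := by
          funext p
          by_cases hp : p = σ a
          · subst hp
            simp only [Function.comp_apply, Function.update_self, id_eq, ht]
          · simp only [Function.comp_apply, Function.update_of_ne hp, id_eq]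
            exact congrFun hs p
        refine ⟨Finite.injective_iff_bijective.mp
          (ez_nondeg_inj X hy (ez_pull X hx hx' hupd)), ?_⟩
        simp only [Function.comp_apply, Function.update_self]
      obtain ⟨h1b, h1v⟩ := key a rfl
      obtain ⟨h2b, h2v⟩ := key b hab.symm
      obtain ⟨p, hp⟩ := h2b.2 (σ' a)
      by_cases hpa : p = σ a
      · subst hpa
        rw [h2v] at hp
        exact hne hp.symm
      · have heq : (σ' ∘ Function.update s (σ a) a) p = (σ' ∘ Function.update s (σ a) b) p := by
          simp only [Function.comp_apply, Function.update_of_ne hpa]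
        have : (σ' ∘ Function.update s (σ a) a) p = (σ' ∘ Function.update s (σ a) a) (σ a) := by
          rw [heq, hp, h1v]
        exact hpa (h1b.1 this)
    refine ⟨rfl, σ' ∘ s, ⟨Finite.injective_iff_bijective.mp hinj,
      ez_pull X hx hx' hs, ?_⟩, ?_⟩
    · funext a
      exact hker (s (σ a)) a (congrFun hs (σ a))
    · rintro β ⟨-, -, hβ⟩
      funext p
      obtain ⟨a, rfl⟩ := hσ p
      calc β (σ a) = σ' a := congrFun hβ a
        _ = σ' (s (σ a)) := (hker (s (σ a)) a (congrFun hs (σ a))).symm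
        _ = (σ' ∘ s) (σ a) := rfl
end

section
/- Let X be a symmetric simplicial set that is spiny in degrees below q, let σ, τ : [m] → [k] be surjections with σ(0) = 0 = τ(0) and k ≤ q, and let x ∈ X_k be nondegenerate. If 𝓑_m(x·σ) = 𝓑_m(x·τ), then σ = τ. Moreover (endomorphism lemma), for any symmetric set X, if x ∈ X_k is nondegenerate and x = x·α for some function α : [k] → [k], then α is a bijection. -/

private def starG (n : ℕ) : SimpleGraph (Fin (n + 1)) where
  Adj i j := i ≠ j ∧ (i = 0 ∨ j = 0)
  symm := by refine ⟨?_⟩; rintro i j ⟨h1, h2⟩; exact ⟨h1.symm, h2.symm⟩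
  loopless := by refine ⟨?_⟩; rintro i ⟨h1, _⟩; exact h1 rfl

private lemma starG_isAcyclic (n : ℕ) : (starG n).IsAcyclic := by
  intro v c hc
  cases c with
  | nil => exact hc.ne_nil rfl
  | cons h1 p =>
    rename_i a
    cases p with
    | nil => exact h1.1 rfl
    | cons h2 p2 =>
      rename_i b
      cases p2 with
      | nil =>
        have h3 := hc.three_le_length
        simp [SimpleGraph.Walk.length_cons] at h3
      | cons h3 p3 =>
        rename_i d
        have hnd := hc.support_nodup
        simp only [SimpleGraph.Walk.support_cons, List.tail_cons, List.nodup_cons] at hnd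
        rcases h2.2 with h | h
        · have hb0 : b ≠ (0 : Fin (n+1)) := fun hb => h2.1 (h.trans hb.symm)
          have hd : d = 0 := h3.2.resolve_left hb0
          apply hnd.1
          have had : a = d := h.trans hd.symm
          rw [had]
          exact List.mem_cons_of_mem b p3.start_mem_support
        · have ha0 : a ≠ (0 : Fin (n+1)) := fun ha => h2.1 (ha.trans h.symm)
          have hv : v = 0 := h1.2.resolve_right ha0
          apply hnd.2.1
          have hbv : b = v := h.trans hv.symm
          rw [hbv]
          exact p3.end_mem_support

private lemma starG_isTree (n : ℕ) : (starG n).IsTree := by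
  constructor
  · rw [SimpleGraph.connected_iff]
    refine ⟨fun v w => ?_, ⟨0⟩⟩
    have key : ∀ u : Fin (n+1), (starG n).Reachable u 0 := by
      intro u
      by_cases h : u = 0
      · subst h
        exact SimpleGraph.Reachable.refl 0
      · exact SimpleGraph.Adj.reachable ⟨h, Or.inr rfl⟩
    exact (key v).trans (key w).symm
  · exact starG_isAcyclic n

private lemma edge_act (X : SymSet) {m k : ℕ} (σ : Fin (m+1) → Fin (k+1))
    (i j : Fin (m+1)) (x : X.obj k) :
    X.edge i j (X.act σ x) = X.edge (σ i) (σ j) x := by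
  unfold SymSet.edge
  rw [X.act_comp]
  congr 1
  funext t
  by_cases h : t = 0 <;> simp [Function.comp, h]

private lemma endo_bijective (X : SymSet) (k : ℕ) (x : X.obj k)
    (α : Fin (k+1) → Fin (k+1)) (hnd : ¬ X.Degenerate x) (hx : x = X.act α x) :
    Function.Bijective α := by
  classical
  by_contra hb
  apply hnd
  have hsurj : ¬ Function.Surjective α := fun hs =>
    hb (Finite.surjective_iff_bijective.mp hs)
  rw [Function.Surjective] at hsurj
  push_neg at hsurj
  obtain ⟨b, hb2⟩ := hsurj
  have hbr : b ∉ Set.range α := by rintro ⟨s, hs⟩; exact hb2 s hs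
  have hcardpos : 0 < Fintype.card ↥(Set.range α) :=
    Fintype.card_pos_iff.mpr ⟨⟨α 0, Set.mem_range_self 0⟩⟩
  obtain ⟨c', hc'⟩ : ∃ c', Fintype.card ↥(Set.range α) = c' + 1 :=
    ⟨Fintype.card ↥(Set.range α) - 1, (Nat.succ_pred_eq_of_pos hcardpos).symm⟩
  let e : ↥(Set.range α) ≃ Fin (c' + 1) := Fintype.equivFinOfCardEq hc'
  let σ' : Fin (k+1) → Fin (c'+1) := fun i => e ⟨α i, Set.mem_range_self i⟩
  let ι : Fin (c'+1) → Fin (k+1) := fun t => (e.symm t : ↥(Set.range α))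
  refine ⟨c', σ', X.act ι x, ?_, ?_, ?_⟩
  · intro t
    obtain ⟨s, hs⟩ := (e.symm t).2
    refine ⟨s, ?_⟩
    have hst : (⟨α s, Set.mem_range_self s⟩ : ↥(Set.range α)) = e.symm t :=
      Subtype.ext hs
    show e ⟨α s, Set.mem_range_self s⟩ = t
    rw [hst, Equiv.apply_symm_apply]
  · intro hbij
    have h1 : Fintype.card (Fin (k+1)) = Fintype.card (Fin (c'+1)) :=
      Fintype.card_of_bijective hbij
    have h2 : Fintype.card (Fin (c'+1)) < Fintype.card (Fin (k+1)) := by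
      refine Fintype.card_lt_of_injective_of_notMem ι ?_ (b := b) ?_
      · intro s t hst
        have : e.symm s = e.symm t := Subtype.ext hst
        exact e.symm.injective this
      · rintro ⟨t, ht⟩
        exact hbr (ht ▸ (e.symm t).2)
    simp only [Fintype.card_fin] at h1 h2
    omega
  · have hcomp : ι ∘ σ' = α := by
      funext i
      show ((e.symm (e ⟨α i, Set.mem_range_self i⟩) : ↥(Set.range α)) : Fin (k+1)) = α i
      rw [Equiv.symm_apply_apply]
    rw [X.act_comp, hcomp]
    exact hx

private lemma edge_inj_aux (X : SymSet) (q k : ℕ) (hX : X.SpinyBelow q) (hk : 1 ≤ k)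
    (hkq : k ≤ q) (x : X.obj k) (hnd : ¬ X.Degenerate x) (a b : Fin (k+1))
    (hab : a ≠ b) (hb0 : b ≠ 0) (he : X.edge 0 a x = X.edge 0 b x) : False := by
  set s : Fin (k+1) → Fin (k+1) := fun j => if j = b then a else j with hs
  have hs0 : s 0 = 0 := by simp [hs, Ne.symm hb0]
  have hmap : X.spineMap (starG k) (X.act s x) = X.spineMap (starG k) x := by
    apply Subtype.ext
    funext i j hlt hadj
    show X.edge i j (X.act s x) = X.edge i j x
    rw [edge_act]
    have hj0 : j ≠ 0 := by
      rintro rfl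
      exact absurd hlt (by simp [Fin.lt_def])
    have hi0 : i = 0 := hadj.2.resolve_right hj0
    subst hi0
    rw [hs0]
    by_cases hjb : j = b
    · subst hjb
      simp only [hs, if_pos rfl]
      exact he
    · simp [hs, hjb]
  have hxx : X.act s x = x := hX k hk hkq (starG k) (starG_isTree k) hmap
  have hbij := endo_bijective X k x s hnd hxx.symm
  have hsab : s a = s b := by simp [hs, hab, if_neg hab]
  exact hab (hbij.1 hsab)

private lemma edge_inj (X : SymSet) (q k : ℕ) (hX : X.SpinyBelow q) (hk : 1 ≤ k)
    (hkq : k ≤ q) (x : X.obj k) (hnd : ¬ X.Degenerate x) :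
    Function.Injective (fun i : Fin (k+1) => X.edge 0 i x) := by
  intro a b h
  by_contra hab
  by_cases hb0 : b = 0
  · exact edge_inj_aux X q k hX hk hkq x hnd b a (fun hh => hab hh.symm)
      (fun ha0 => hab (ha0.trans hb0.symm)) h.symm
  · exact edge_inj_aux X q k hX hk hkq x hnd a b hab hb0 h

/-- (i) if `X` is spiny in degrees below `q`, `σ, τ : [m] ↠ [k]`
with `σ(0) = 0 = τ(0)`, `k ≤ q`, `x ∈ X_k` nondegenerate and
`𝓑_m(x·σ) = 𝓑_m(x·τ)`, then `σ = τ`; (ii) if `x` is nondegenerate and `x = x·α`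
for `α : [k] → [k]`, then `α` is a bijection. -/
theorem stmt18 :
    (∀ (X : SymSet) (q k m : ℕ) (σ τ : Fin (m + 1) → Fin (k + 1)) (x : X.obj k),
        X.SpinyBelow q → Function.Surjective σ → Function.Surjective τ →
        σ 0 = 0 → τ 0 = 0 → k ≤ q → ¬ X.Degenerate x →
        X.bousfield (X.act σ x) = X.bousfield (X.act τ x) → σ = τ) ∧
    (∀ (X : SymSet) (k : ℕ) (x : X.obj k) (α : Fin (k + 1) → Fin (k + 1)),
        ¬ X.Degenerate x → x = X.act α x → Function.Bijective α) := by
  constructor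
  · intro X q k m σ τ x hX hσs hτs hσ0 hτ0 hkq hnd hB
    cases k with
    | zero =>
      funext j
      have h1 := (σ j).isLt
      have h2 := (τ j).isLt
      apply Fin.ext
      omega
    | succ k' =>
      funext j
      induction j using Fin.cases with
      | zero => rw [hσ0, hτ0]
      | succ i =>
        have h1 := congrFun hB i
        unfold SymSet.bousfield at h1
        rw [edge_act, edge_act, hσ0, hτ0] at h1
        exact edge_inj X q (k'+1) hX (Nat.le_add_left 1 k') hkq x hnd h1
  · exact fun X k x α hnd hx => endo_bijective X k x α hnd hx
end
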